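/- The minimum of |z| over all complex roots z of the polynomial q⁴ + q³ + 4q² + q + 1 equals R_{√2} = (1 + √2 − √(2√2 − 1))/2; that is, this polynomial has a root of modulus R_{√2} and every root has modulus at least R_{√2}. -/

import Mathlib

/-- `R_{√2} = (1 + √2 − √(2√2 − 1))/2`. -/
noncomputable def Rsqrt2 : ℝ := (1 + Real.sqrt 2 - Real.sqrt (2 * Real.sqrt 2 - 1)) / 2

open Complex in
lemma quartic_norm_aux (a z : ℂ) (ha : a ^ 2 = -7) (hca : (starRingEnd ℂ) a = -a)
    (hz : z ^ 2 - ((-1 + a) / 2) * z + 1 = 0) :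
    (‖z‖ ^ 2) ^ 4 - 2 * (‖z‖ ^ 2) ^ 3 - 5 * (‖z‖ ^ 2) ^ 2 - 2 * ‖z‖ ^ 2 + 1 = 0 := by
  set c : ℝ := ‖z‖ ^ 2 with hcdef
  set u : ℂ := (starRingEnd ℂ) z with hu
  have hc : z * u = (c : ℂ) := by
    rw [hu, Complex.mul_conj]
    norm_cast
    rw [hcdef, Complex.sq_norm]
  have h2 : u ^ 2 - ((-1 - a) / 2) * u + 1 = 0 := by
    have h := congrArg (starRingEnd ℂ) hz
    simp only [map_sub, map_add, map_mul, map_pow, map_div₀, map_one, map_ofNat, hca,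
      map_zero, map_neg, ← hu] at h
    linear_combination h
  have hz' : z ^ 2 + 1 = ((-1 + a) / 2) * z := by linear_combination hz
  have h2' : u ^ 2 + 1 = ((-1 - a) / 2) * u := by linear_combination h2
  have hm : (z ^ 2 + 1) * (u ^ 2 + 1) = ((-1 + a) / 2) * ((-1 - a) / 2) * (z * u) := by
    rw [hz', h2']; ring
  have hA : (c : ℂ) ^ 2 + z ^ 2 + u ^ 2 + 1 = 2 * c := by
    linear_combination hm + (2 - z * u - (c : ℂ)) * hc + (-(z * u) / 4) * ha
  have hB : (z + u) * ((c : ℂ) + 1) + c = 0 := by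
    linear_combination u * hz + z * h2 + (-(z + u + 1)) * hc
  have hq : (c : ℂ) ^ 4 - 2 * (c : ℂ) ^ 3 - 5 * (c : ℂ) ^ 2 - 2 * (c : ℂ) + 1 = 0 := by
    linear_combination (2 * (c : ℂ) - ((z + u) * ((c : ℂ) + 1) + (c : ℂ))) * hB
      + ((c : ℂ) + 1) ^ 2 * hA + 2 * ((c : ℂ) + 1) ^ 2 * hc
  exact_mod_cast hq

lemma t_cases (t : ℝ) (ht : t ^ 4 - 2 * t ^ 3 - 5 * t ^ 2 - 2 * t + 1 = 0) :
    t = Rsqrt2 ^ 2 ∨ t = 1 + 2 * Real.sqrt 2 - Rsqrt2 ^ 2 := by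
  set s2 := Real.sqrt 2 with hs2def
  set k := Real.sqrt (2 * s2 - 1) with hkdef
  have hs2 : s2 ^ 2 = 2 := Real.sq_sqrt (by norm_num)
  have hs2n : (0:ℝ) ≤ s2 := Real.sqrt_nonneg 2
  have hs1 : (1:ℝ) ≤ s2 := by nlinarith
  have hk2 : k ^ 2 = 2 * s2 - 1 := Real.sq_sqrt (by nlinarith)
  have hkn : (0:ℝ) ≤ k := Real.sqrt_nonneg _
  have hR2 : Rsqrt2 ^ 2 = (1 + 2 * s2 - (1 + s2) * k) / 2 := by
    rw [Rsqrt2, ← hs2def, ← hkdef]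
    linear_combination (1/4) * hs2 + (1/4) * hk2
  have hR4 : (Rsqrt2 ^ 2) ^ 2 - (1 + 2 * s2) * Rsqrt2 ^ 2 + 1 = 0 := by
    rw [hR2]
    linear_combination ((k ^ 2 - 4) / 4 + 1) * hs2 + ((3 + 2 * s2) / 4) * hk2
  have hpos : 0 < t ^ 2 - (1 - 2 * s2) * t + 1 := by
    nlinarith [sq_nonneg (t - (1 - 2 * s2) / 2), sq_nonneg (s2 - 3/2)]
  have hquad : t ^ 2 - (1 + 2 * s2) * t + 1 = 0 := by
    have hfac : (t ^ 2 - (1 + 2 * s2) * t + 1) * (t ^ 2 - (1 - 2 * s2) * t + 1) = 0 := by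
      linear_combination ht + (-4 * t ^ 2) * hs2
    rcases mul_eq_zero.1 hfac with h | h
    · exact h
    · exact absurd h (ne_of_gt hpos)
  have hsplit : (t - Rsqrt2 ^ 2) * (t - (1 + 2 * s2 - Rsqrt2 ^ 2)) = 0 := by
    linear_combination hquad - hR4
  rcases mul_eq_zero.1 hsplit with h | h
  · left; linarith
  · right; linarith

lemma R_facts : 0 < Rsqrt2 ∧ 2 * Rsqrt2 ^ 2 ≤ 1 + 2 * Real.sqrt 2 ∧ Rsqrt2 ^ 2 < 2 * Real.sqrt 2 := by
  set s2 := Real.sqrt 2 with hs2def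
  set k := Real.sqrt (2 * s2 - 1) with hkdef
  have hs2 : s2 ^ 2 = 2 := Real.sq_sqrt (by norm_num)
  have hs2n : (0:ℝ) ≤ s2 := Real.sqrt_nonneg 2
  have hs1 : (1:ℝ) ≤ s2 := by nlinarith
  have hk2 : k ^ 2 = 2 * s2 - 1 := Real.sq_sqrt (by nlinarith)
  have hkn : (0:ℝ) ≤ k := Real.sqrt_nonneg _
  have hkpos : 0 < k := by nlinarith
  have hRdef : Rsqrt2 = (1 + s2 - k) / 2 := by rw [Rsqrt2, ← hs2def, ← hkdef]
  refine ⟨?_, ?_, ?_⟩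
  · rw [hRdef]; nlinarith
  · rw [hRdef]; nlinarith
  · rw [hRdef]; nlinarith

open Complex in
theorem min_root_modulus_eq_Rsqrt2 :
    (∃ z : ℂ, z ^ 4 + z ^ 3 + 4 * z ^ 2 + z + 1 = 0 ∧ ‖z‖ = Rsqrt2) ∧
    ∀ z : ℂ, z ^ 4 + z ^ 3 + 4 * z ^ 2 + z + 1 = 0 → Rsqrt2 ≤ ‖z‖ := by
  obtain ⟨hRpos, hRhalf, hRlt⟩ := R_facts
  set a : ℂ := (Real.sqrt 7 : ℝ) * Complex.I with hadef
  have h7 : ((Real.sqrt 7 : ℝ) : ℂ) ^ 2 = 7 := by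
    norm_cast
    rw [Real.sq_sqrt] <;> norm_num
  have ha : a ^ 2 = -7 := by
    rw [hadef, mul_pow, Complex.I_sq, h7]; ring
  have hca : (starRingEnd ℂ) a = -a := by
    rw [hadef]; simp [Complex.conj_I, Complex.conj_ofReal]
  have hca' : (starRingEnd ℂ) (-a) = -(-a) := by rw [map_neg, hca]
  have ha' : (-a) ^ 2 = -7 := by rw [neg_pow]; simpa using ha
  -- factorization
  have hfac : ∀ z : ℂ, z ^ 4 + z ^ 3 + 4 * z ^ 2 + z + 1 =
      (z ^ 2 - ((-1 + a) / 2) * z + 1) * (z ^ 2 - ((-1 + -a) / 2) * z + 1) := by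
    intro z
    linear_combination ((z ^ 2) / 4) * ha
  -- every root's squared norm satisfies the quartic
  have hroot_t : ∀ z : ℂ, z ^ 4 + z ^ 3 + 4 * z ^ 2 + z + 1 = 0 →
      (‖z‖ ^ 2) ^ 4 - 2 * (‖z‖ ^ 2) ^ 3 - 5 * (‖z‖ ^ 2) ^ 2 - 2 * ‖z‖ ^ 2 + 1 = 0 := by
    intro z hz
    rw [hfac z] at hz
    rcases mul_eq_zero.1 hz with h | h
    · exact quartic_norm_aux a z ha hca h
    · exact quartic_norm_aux (-a) z ha' hca' h
  constructor
  · -- existence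
    obtain ⟨d, hd⟩ := IsAlgClosed.exists_pow_nat_eq (((-1 + a) / 2) ^ 2 - 4) (n := 2) (by norm_num)
    set w : ℂ := (-1 + a) / 2 with hwdef
    set z1 : ℂ := (w + d) / 2 with hz1def
    have hz1 : z1 ^ 2 - w * z1 + 1 = 0 := by
      rw [hz1def]; linear_combination (1/4 : ℂ) * hd
    have hz1ne : z1 ≠ 0 := by
      intro h
      rw [h] at hz1
      simp at hz1
    -- choose root with norm ≤ 1
    obtain ⟨z, hzq, hzle⟩ : ∃ z : ℂ, z ^ 2 - w * z + 1 = 0 ∧ ‖z‖ ≤ 1 := by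
      rcases le_or_gt ‖z1‖ 1 with h | h
      · exact ⟨z1, hz1, h⟩
      · have hmul : z1 * (w - z1) = 1 := by linear_combination -hz1
        have hinv : z1⁻¹ = w - z1 := inv_eq_of_mul_eq_one_right hmul
        refine ⟨z1⁻¹, ?_, ?_⟩
        · rw [hinv]
          linear_combination hz1
        · rw [norm_inv]
          exact inv_le_one_of_one_le₀ h.le
      -- end
    have hzroot : z ^ 4 + z ^ 3 + 4 * z ^ 2 + z + 1 = 0 := by
      rw [hfac z]
      have : z ^ 2 - ((-1 + a) / 2) * z + 1 = 0 := by rw [← hwdef]; exact hzq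
      rw [this, zero_mul]
    have ht := hroot_t z hzroot
    rcases t_cases _ ht with h | h
    · refine ⟨z, hzroot, ?_⟩
      have hzn : (0:ℝ) ≤ ‖z‖ := norm_nonneg z
      nlinarith
    · exfalso
      have h1 : ‖z‖ ^ 2 ≤ 1 := by nlinarith [norm_nonneg z]
      nlinarith
  · -- minimality
    intro z hz
    have ht := hroot_t z hz
    have hzn : (0:ℝ) ≤ ‖z‖ := norm_nonneg z
    rcases t_cases _ ht with h | h
    · nlinarith
    · nlinarith
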